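/- Let F be a locally constant sheaf of sets on a topological space U, let V ⊂ U be a connected open subset with basepoint x₀ ∈ V such that the inclusion induces an isomorphism π₁(V, x₀) → π₁(U, x₀), and assume U is connected, locally path-connected and semi-locally simply connected. Then every section of F on V extends uniquely to a section of F on U. -/

import Mathlib

/- STATEMENT 5: Let F be a locally constant sheaf of sets (equivalently, a covering space
p : E → X) on a connected, locally path-connected, semi-locally simply connected space X,
and V ⊆ X a connected open subset with basepoint x₀ such that the inclusion induces an
isomorphism π₁(V,x₀) → π₁(X,x₀).  Then every section of F over V extends uniquely to X. -/

namespace Stmt5Aux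

open unitInterval Set


lemma preconn_preimage (S : Set ℝ) (hS : S.OrdConnected) :
    IsPreconnected ((↑) ⁻¹' S : Set unitInterval) := by
  have himg : ((↑) ⁻¹' S : Set unitInterval) =
      (fun x : ℝ => Set.projIcc (0:ℝ) 1 zero_le_one x) '' (S ∩ Set.Icc 0 1) := by
    ext t
    constructor
    · intro ht
      exact ⟨(t : ℝ), ⟨ht, t.2⟩, Set.projIcc_val zero_le_one t⟩
    · rintro ⟨x, ⟨hxS, hx01⟩, rfl⟩
      simpa [Set.projIcc_of_mem zero_le_one hx01] using hxS
  rw [himg]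
  exact ((hS.inter Set.ordConnected_Icc).isPreconnected).image _ continuous_projIcc.continuousOn

lemma preconn_Icc (a b : unitInterval) : IsPreconnected (Set.Icc a b) := by
  have : (Set.Icc a b : Set unitInterval) = (↑) ⁻¹' (Set.Icc (a:ℝ) (b:ℝ)) := by
    ext t; simp [Set.mem_Icc, Subtype.coe_le_coe]
  rw [this]
  exact preconn_preimage _ Set.ordConnected_Icc

variable {E X : Type*} [TopologicalSpace X] [TopologicalSpace E] {p : E → X}
    [∀ x : X, Nonempty (p ⁻¹' {x})]

/-- local section of a covering through a point `e` with `p e` in the base set. -/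
noncomputable def sec (hp : IsCoveringMap p) (x : X) (e : E) : X → E :=
  fun u => ((hp x).toTrivialization.toOpenPartialHomeomorph.symm)
    (u, ((hp x).toTrivialization e).2)

lemma sec_proj (hp : IsCoveringMap p) (x : X) (e : E) {u : X}
    (hu : u ∈ (hp x).toTrivialization.baseSet) : p (sec hp x e u) = u :=
  (hp x).toTrivialization.proj_symm_apply' hu

lemma sec_self (hp : IsCoveringMap p) (x : X) (e : E)
    (he : p e ∈ (hp x).toTrivialization.baseSet) : sec hp x e (p e) = e := by
  have hsrc : e ∈ (hp x).toTrivialization.source :=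
    (hp x).toTrivialization.mem_source.mpr he
  have h1 : ((hp x).toTrivialization e).1 = p e :=
    (hp x).toTrivialization.coe_fst' he
  unfold sec
  conv_lhs => rw [← h1]
  exact (hp x).toTrivialization.toOpenPartialHomeomorph.left_inv hsrc

lemma sec_continuousOn (hp : IsCoveringMap p) (x : X) (e : E) :
    ContinuousOn (sec hp x e) (hp x).toTrivialization.baseSet := by
  have h1 : ContinuousOn ((hp x).toTrivialization.toOpenPartialHomeomorph.symm)
      ((hp x).toTrivialization.target) :=
    (hp x).toTrivialization.toOpenPartialHomeomorph.symm.continuousOn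
  have h2 : Continuous (fun u : X => (u, ((hp x).toTrivialization e).2)) :=
    continuous_id.prodMk continuous_const
  refine (h1.comp h2.continuousOn ?_)
  intro u hu
  rw [(hp x).toTrivialization.target_eq]
  exact ⟨hu, trivial⟩


variable {E X : Type*} [TopologicalSpace X] [TopologicalSpace E] {p : E → X}
    [∀ x : X, Nonempty (p ⁻¹' {x})]

lemma exists_lift (hp : IsCoveringMap p) (γ : C(unitInterval, X)) (e₀ : E)
    (he : p e₀ = γ 0) : ∃ Γ : unitInterval → E, Continuous Γ ∧ Γ 0 = e₀ ∧ ∀ t, p (Γ t) = γ t := by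
  obtain ⟨δ, hδ, hLeb⟩ := lebesgue_number_lemma_of_metric (s := (univ : Set unitInterval))
    (c := fun x : X => γ ⁻¹' (hp x).toTrivialization.baseSet) isCompact_univ
    (fun x => (hp x).toTrivialization.open_baseSet.preimage γ.continuous)
    (fun t _ => Set.mem_iUnion.mpr ⟨γ t, (hp (γ t)).mem_toTrivialization_baseSet⟩)
  obtain ⟨n, hn⟩ := exists_nat_gt (1 / δ)
  have hn0 : 0 < (n : ℝ) := lt_trans (by positivity) hn
  have h1n : 1 / (n : ℝ) < δ := by
    rw [div_lt_iff₀ hn0]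
    rw [div_lt_iff₀ hδ] at hn
    linarith [hn]
  have hfrac : ∀ k : ℕ, k ≤ n → (k : ℝ) / n ∈ Set.Icc (0:ℝ) 1 := by
    intro k hk
    refine ⟨by positivity, ?_⟩
    rw [div_le_one hn0]; exact_mod_cast hk
  have key : ∀ k : ℕ, k ≤ n → ∃ Γ : unitInterval → E, Continuous Γ ∧ Γ 0 = e₀ ∧
      ∀ t : unitInterval, (t : ℝ) ≤ (k : ℝ) / n → p (Γ t) = γ t := by
    intro k hk
    induction k with
    | zero =>
      refine ⟨fun _ => e₀, continuous_const, rfl, ?_⟩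
      intro t ht
      have : t = 0 := by
        ext
        simpa using le_antisymm (by simpa using ht) t.2.1
      rw [this, he]
    | succ k ih =>
      obtain ⟨Γ, hΓc, hΓ0, hΓp⟩ := ih (le_of_lt (Nat.lt_of_succ_le hk))
      have hkn : (k : ℝ) / n ∈ Set.Icc (0:ℝ) 1 := hfrac k (le_of_lt (Nat.lt_of_succ_le hk))
      set a : unitInterval := ⟨(k : ℝ) / n, hkn⟩ with ha
      obtain ⟨x, hx⟩ := hLeb a trivial
      have hball : ∀ t : unitInterval, (k : ℝ) / n ≤ (t : ℝ) → (t : ℝ) ≤ ((k:ℝ)+1) / n →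
          γ t ∈ (hp x).toTrivialization.baseSet := by
        intro t h1 h2
        apply hx
        rw [Metric.mem_ball, Subtype.dist_eq, Real.dist_eq,
          abs_of_nonneg (sub_nonneg.mpr h1)]
        calc (t : ℝ) - (k:ℝ)/n ≤ ((k:ℝ)+1)/n - (k:ℝ)/n := by linarith
        _ = 1/n := by ring
        _ < δ := h1n
      have hord : (k:ℝ)/n ≤ ((k:ℝ)+1)/n := by gcongr; linarith
      have hpa : p (Γ a) = γ a := hΓp a (le_refl _)
      have hγa : γ a ∈ (hp x).toTrivialization.baseSet := hball a (le_refl _) hord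
      -- the clamp function
      have hclmem : ∀ t : unitInterval,
          max ((k:ℝ)/n) (min (t:ℝ) (((k:ℝ)+1)/n)) ∈ Set.Icc (0:ℝ) 1 := by
        intro t
        have h2 : ((k:ℝ)+1)/n ≤ 1 := by
          have := (hfrac (k+1) hk).2
          push_cast at this
          linarith
        constructor
        · exact le_trans hkn.1 (le_max_left _ _)
        · exact max_le (le_trans hord h2) (le_trans (min_le_left _ _) t.2.2)
      set clamp : unitInterval → unitInterval :=
        fun t => ⟨max ((k:ℝ)/n) (min (t:ℝ) (((k:ℝ)+1)/n)), hclmem t⟩ with hcl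
      have hclcont : Continuous clamp := by
        apply Continuous.subtype_mk
        exact continuous_const.max ((continuous_subtype_val).min continuous_const)
      have hclge : ∀ t, (k:ℝ)/n ≤ (clamp t : ℝ) := fun t => le_max_left _ _
      have hclle : ∀ t, (clamp t : ℝ) ≤ ((k:ℝ)+1)/n :=
        fun t => max_le hord (min_le_right _ _)
      have hclid : ∀ t : unitInterval, (k:ℝ)/n ≤ (t:ℝ) → (t:ℝ) ≤ ((k:ℝ)+1)/n →
          clamp t = t := by
        intro t h1 h2
        ext
        simp only [hcl]
        rw [min_eq_left h2, max_eq_right h1]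
      have hγcl : ∀ t, γ (clamp t) ∈ (hp x).toTrivialization.baseSet :=
        fun t => hball _ (hclge t) (hclle t)
      -- the extended lift
      refine ⟨fun t => if (t:ℝ) ≤ (k:ℝ)/n then Γ t else sec hp x (Γ a) (γ (clamp t)),
        ?_, ?_, ?_⟩
      · apply Continuous.if_le hΓc ?_ continuous_subtype_val continuous_const
        · intro t ht
          have hta : t = a := by ext; exact ht
          have : clamp t = t := hclid t (le_of_eq ht.symm) (ht ▸ hord)
          rw [this, hta, ← hpa, sec_self hp x (Γ a) (hpa ▸ hγa)]
        · exact (sec_continuousOn hp x (Γ a)).comp_continuous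
            (γ.continuous.comp hclcont) hγcl
      · show (if ((0:unitInterval):ℝ) ≤ (k:ℝ)/n then Γ 0 else _) = e₀
        rw [if_pos (by simpa using hkn.1)]
        exact hΓ0
      · intro t ht
        show p (if (t:ℝ) ≤ (k:ℝ)/n then Γ t else sec hp x (Γ a) (γ (clamp t))) = γ t
        by_cases h : (t:ℝ) ≤ (k:ℝ)/n
        · rw [if_pos h]; exact hΓp t h
        · rw [if_neg h]
          push_neg at h
          have hcl' : clamp t = t := hclid t h.le (by push_cast at ht ⊢; linarith)
          rw [hcl', sec_proj hp x (Γ a) (hball t h.le (by push_cast at ht ⊢; linarith))]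
  obtain ⟨Γ, h1, h2, h3⟩ := key n (le_refl n)
  refine ⟨Γ, h1, h2, fun t => h3 t ?_⟩
  rw [div_self (ne_of_gt hn0)]
  exact t.2.2

variable {E X : Type*} [TopologicalSpace X] [TopologicalSpace E] {p : E → X}
    [∀ x : X, Nonempty (p ⁻¹' {x})]

lemma lift_unique (hp : IsCoveringMap p) {Γ₁ Γ₂ : unitInterval → E}
    (h₁ : Continuous Γ₁) (h₂ : Continuous Γ₂)
    (heq : ∀ t, p (Γ₁ t) = p (Γ₂ t)) (h0 : Γ₁ 0 = Γ₂ 0) : Γ₁ = Γ₂ :=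
  hp.eq_of_comp_eq h₁ h₂ (funext heq) 0 h0

lemma endpoint_eq (hp : IsCoveringMap p) {x y : X} {γ₀ γ₁ : Path x y}
    (h : γ₀.Homotopic γ₁) {e₀ : E} {Γ₀ Γ₁ : unitInterval → E}
    (hc₀ : Continuous Γ₀) (hc₁ : Continuous Γ₁)
    (h00 : Γ₀ 0 = e₀) (h10 : Γ₁ 0 = e₀)
    (hl₀ : ∀ t, p (Γ₀ t) = γ₀ t) (hl₁ : ∀ t, p (Γ₁ t) = γ₁ t) :
    Γ₀ 1 = Γ₁ 1 := by
  obtain ⟨H⟩ := h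
  have hH0 : ∀ t : unitInterval, H (t, 0) = x := by
    intro t
    have := H.eq_fst t (Set.mem_insert (0:unitInterval) {1})
    simpa using this
  have hH1 : ∀ t : unitInterval, H (t, 1) = y := by
    intro t
    have := H.eq_fst t (Set.mem_insert_of_mem (0:unitInterval) rfl)
    simpa using this
  have hpe : p e₀ = x := by rw [← h00, hl₀ 0, γ₀.source]
  have hHcont : Continuous fun q : unitInterval × unitInterval => H q := H.continuous
  -- the family of lifts
  have hex : ∀ t : unitInterval, ∃ Γ : unitInterval → E, Continuous Γ ∧ Γ 0 = e₀ ∧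
      ∀ s, p (Γ s) = H (t, s) := by
    intro t
    exact exists_lift hp ⟨fun s => H (t, s),
      hHcont.comp (continuous_const.prodMk continuous_id)⟩ e₀ (by simpa using (hH0 t) ▸ hpe)
  choose Λ hΛc hΛ0 hΛp using hex
  -- the endpoint map is locally constant
  have hloc : IsLocallyConstant (fun t => Λ t 1) := by
    rw [IsLocallyConstant.iff_exists_open]
    intro t
    obtain ⟨δ, hδ, hLeb⟩ := lebesgue_number_lemma_of_metric
      (s := (univ : Set (unitInterval × unitInterval)))
      (c := fun x : X => (fun q : unitInterval × unitInterval => H q) ⁻¹'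
        (hp x).toTrivialization.baseSet) isCompact_univ
      (fun x => (hp x).toTrivialization.open_baseSet.preimage hHcont)
      (fun q _ => Set.mem_iUnion.mpr ⟨H q, (hp (H q)).mem_toTrivialization_baseSet⟩)
    obtain ⟨n, hn⟩ := exists_nat_gt (1 / δ)
    have hn0 : 0 < (n : ℝ) := lt_trans (by positivity) hn
    have h1n : 1 / (n : ℝ) < δ := by
      rw [div_lt_iff₀ hn0]; rw [div_lt_iff₀ hδ] at hn; linarith
    have hfrac : ∀ k : ℕ, k ≤ n → (k : ℝ) / n ∈ Set.Icc (0:ℝ) 1 := by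
      intro k hk
      refine ⟨by positivity, ?_⟩
      rw [div_le_one hn0]; exact_mod_cast hk
    set J : Set unitInterval := Metric.ball t (δ/2) with hJ
    have hJopen : IsOpen J := Metric.isOpen_ball
    have htJ : t ∈ J := Metric.mem_ball_self (by positivity)
    have hJpre : IsPreconnected J := by
      have : J = (↑) ⁻¹' (Metric.ball (t:ℝ) (δ/2)) := by
        ext t'
        simp [hJ, Metric.mem_ball, Subtype.dist_eq]
      rw [this, Real.ball_eq_Ioo]
      exact preconn_preimage _ Set.ordConnected_Ioo
    refine ⟨J, hJopen, htJ, ?_⟩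
    -- main induction over the subdivision
    have key : ∀ k : ℕ, (hk : k ≤ n) →
        ContinuousOn (fun t' => Λ t' ⟨(k:ℝ)/n, hfrac k hk⟩) J := by
      intro k hk
      induction k with
      | zero =>
        have : ∀ t' : unitInterval, Λ t' ⟨(0:ℕ)/(n:ℝ), hfrac 0 hk⟩ = e₀ := by
          intro t'
          have h0' : (⟨(0:ℕ)/(n:ℝ), hfrac 0 hk⟩ : unitInterval) = 0 := by
            ext; simp
          rw [h0']
          exact hΛ0 t'
        exact (continuousOn_congr (fun t' _ => this t')).mpr continuousOn_const
      | succ k ih =>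
        have hkn := le_of_lt (Nat.lt_of_succ_le hk)
        set a : unitInterval := ⟨(k:ℝ)/n, hfrac k hkn⟩ with ha
        set b : unitInterval := ⟨((k+1):ℕ)/(n:ℝ), hfrac (k+1) hk⟩ with hb
        have hab : (a:ℝ) ≤ (b:ℝ) := by
          show (k:ℝ)/n ≤ ((k+1):ℕ)/(n:ℝ)
          gcongr
          exact_mod_cast Nat.le_succ k
        obtain ⟨x', hx'⟩ := hLeb (t, a) trivial
        have hrect : ∀ (t' : unitInterval) (s : unitInterval), t' ∈ J →
            (a:ℝ) ≤ (s:ℝ) → (s:ℝ) ≤ (b:ℝ) →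
            H (t', s) ∈ (hp x').toTrivialization.baseSet := by
          intro t' s ht' h1 h2
          apply hx'
          rw [Metric.mem_ball, Prod.dist_eq]
          apply max_lt
          · exact lt_trans (by simpa [hJ, Metric.mem_ball] using ht') (by linarith)
          · rw [Subtype.dist_eq, Real.dist_eq, abs_of_nonneg (by linarith)]
            have hble : (b:ℝ) - (a:ℝ) ≤ 1/n := by
              show ((k+1):ℕ)/(n:ℝ) - (k:ℝ)/n ≤ 1/n
              push_cast
              rw [div_sub_div_same]
              gcongr <;> linarith
            linarith
        have hformula : ∀ t' ∈ J, Λ t' b = sec hp x' (Λ t' a) (H (t', b)) := by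
          intro t' ht'
          have heqon : Set.EqOn (fun s => Λ t' s)
              (fun s => sec hp x' (Λ t' a) (H (t', s))) (Set.Icc a b) := by
            apply hp.eqOn_of_comp_eqOn (preconn_Icc a b)
              (hΛc t').continuousOn
              ?_ ?_ (a := a) (Set.left_mem_Icc.mpr hab) ?_
            · -- continuity of the section composite
              apply (sec_continuousOn hp x' (Λ t' a)).comp
                ((hHcont.comp (continuous_const.prodMk continuous_id)).continuousOn)
              intro s hs
              exact hrect t' s ht' hs.1 hs.2
            · -- p ∘ both agree
              intro s hs
              show p (Λ t' s) = p (sec hp x' (Λ t' a) (H (t', s)))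
              rw [hΛp t' s, sec_proj hp x' _ (hrect t' s ht' hs.1 hs.2)]
            · -- agreement at a
              show Λ t' a = sec hp x' (Λ t' a) (H (t', a))
              have hpa : p (Λ t' a) = H (t', a) := hΛp t' a
              rw [← hpa, sec_self hp x' _ (hpa ▸ hrect t' a ht' le_rfl hab)]
          exact heqon (Set.right_mem_Icc.mpr hab)
        -- continuity of the formula in t'
        have hcont2 : ContinuousOn (fun t' => sec hp x' (Λ t' a) (H (t', b))) J := by
          have hin : ∀ t' ∈ J, Λ t' a ∈ (hp x').toTrivialization.source := by
            intro t' ht'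
            rw [Bundle.Trivialization.mem_source, hΛp t' a]
            exact hrect t' a ht' le_rfl hab
          have hstep1 : ContinuousOn
              (fun t' => ((hp x').toTrivialization (Λ t' a)).2) J := by
            apply continuous_snd.comp_continuousOn
            exact ((hp x').toTrivialization.toOpenPartialHomeomorph.continuousOn.comp
              (ih hkn) hin)
          have hstep3 : ContinuousOn
              (fun t' : unitInterval => ((H (t', b)),
                ((hp x').toTrivialization (Λ t' a)).2)) J :=
            ((hHcont.comp (continuous_id.prodMk continuous_const)).continuousOn).prodMk hstep1
          apply ((hp x').toTrivialization.toOpenPartialHomeomorph.symm.continuousOn.comp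
            hstep3 ?_)
          intro t' ht'
          rw [OpenPartialHomeomorph.symm_source, (hp x').toTrivialization.target_eq]
          exact ⟨hrect t' b ht' hab le_rfl, trivial⟩
        exact (continuousOn_congr hformula).mpr hcont2
    -- conclude: endpoint map is continuous on J with values in discrete fiber
    have h1' : (⟨(n:ℝ)/n, hfrac n le_rfl⟩ : unitInterval) = 1 := by
      ext
      simp [div_self (ne_of_gt hn0)]
    have hcontend : ContinuousOn (fun t' => Λ t' 1) J := by
      have := key n le_rfl
      rwa [h1'] at this
    have hfib : ∀ t' : unitInterval, Λ t' 1 ∈ p ⁻¹' {y} := by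
      intro t'
      simp only [Set.mem_preimage, Set.mem_singleton_iff, hΛp t' 1, hH1 t']
    haveI : DiscreteTopology ↑(p ⁻¹' {y}) := (hp y).1
    set F : unitInterval → ↑(p ⁻¹' {y}) := fun t' => ⟨Λ t' 1, hfib t'⟩ with hF
    have hFcont : ContinuousOn F J := by
      rw [Topology.IsInducing.subtypeVal.continuousOn_iff]
      exact hcontend
    have hsub : (F '' J).Subsingleton := (hJpre.image F hFcont).subsingleton
    intro t' ht'
    have := hsub ⟨t', ht', rfl⟩ ⟨t, htJ, rfl⟩
    exact Subtype.ext_iff.mp this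
  -- conclude
  have hΛ0Γ : Λ 0 = Γ₀ := lift_unique hp (hΛc 0) hc₀
    (fun s => by rw [hΛp 0 s, hl₀ s, H.apply_zero]; rfl) (by rw [hΛ0 0, h00])
  have hΛ1Γ : Λ 1 = Γ₁ := lift_unique hp (hΛc 1) hc₁
    (fun s => by rw [hΛp 1 s, hl₁ s, H.apply_one]; rfl) (by rw [hΛ0 1, h10])
  calc Γ₀ 1 = Λ 0 1 := by rw [hΛ0Γ]
  _ = Λ 1 1 := hloc.apply_eq_of_preconnectedSpace 0 1
  _ = Γ₁ 1 := by rw [hΛ1Γ]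


end Stmt5Aux

open Stmt5Aux unitInterval Set

theorem stmt5 {X E : Type*} [TopologicalSpace X] [TopologicalSpace E]
    [ConnectedSpace X] [LocallyPathConnectedSpace X]
    -- semi-local simple connectedness of X:
    (hslsc : ∀ x : X, ∃ U : Set X, IsOpen U ∧ x ∈ U ∧
      ∀ γ : Path x x, (∀ τ : unitInterval, γ τ ∈ U) →
        (⟦γ⟧ : Path.Homotopic.Quotient x x) = ⟦Path.refl x⟧)
    {p : E → X} (hp : IsCoveringMap p)
    (V : Set X) (hV : IsOpen V) (hVconn : IsConnected V) (x₀ : X) (hx₀ : x₀ ∈ V)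
    -- the inclusion V ↪ X induces an isomorphism on fundamental groups at x₀:
    (hiso : Function.Bijective
      (fun q : Path.Homotopic.Quotient (⟨x₀, hx₀⟩ : V) (⟨x₀, hx₀⟩ : V) =>
        Path.Homotopic.Quotient.map q ⟨(Subtype.val : V → X), continuous_subtype_val⟩))
    -- a continuous section of the covering over V:
    (s : V → E) (hs : Continuous s) (hps : ∀ v : V, p (s v) = (v : X)) :
    -- it extends uniquely to a continuous section over all of X:
    ∃! S : X → E, Continuous S ∧ (∀ x, p (S x) = x) ∧ ∀ v : V, S (v : X) = s v := by
  haveI : PathConnectedSpace X := pathConnectedSpace_iff_connectedSpace.mpr inferInstance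
  set e₀ : E := s ⟨x₀, hx₀⟩ with he₀
  have hpe₀ : p e₀ = x₀ := hps _
  haveI hsurj : ∀ x : X, Nonempty (p ⁻¹' {x}) := by
    have hclopen : IsClopen {x : X | Nonempty (p ⁻¹' {x})} := by
      refine ⟨?_, ?_⟩
      · rw [← isOpen_compl_iff, isOpen_iff_forall_mem_open]
        intro x hx
        obtain ⟨_, U, hxU, hU, _, H, hH⟩ := hp x
        refine ⟨U, fun y hy ⟨⟨e, he⟩⟩ => hx ⟨(H ⟨e, ?_⟩).2⟩, hU, hxU⟩
        show p e ∈ U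
        rw [show p e = y from he]
        exact hy
      · rw [isOpen_iff_forall_mem_open]
        rintro x ⟨i⟩
        obtain ⟨_, U, hxU, hU, _, H, hH⟩ := hp x
        refine ⟨U, fun y hy => ⟨⟨(H.symm (⟨y, hy⟩, i)).1, ?_⟩⟩, hU, hxU⟩
        show p _ = y
        rw [← hH]
        simp
    intro x
    exact Set.eq_univ_iff_forall.mp (hclopen.eq_univ ⟨x₀, ⟨⟨e₀, hpe₀⟩⟩⟩) x
  -- lifts of paths from x₀
  have hexl : ∀ (z : X) (γ : Path x₀ z), ∃ Γ : unitInterval → E,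
      Continuous Γ ∧ Γ 0 = e₀ ∧ ∀ t, p (Γ t) = γ t := by
    intro z γ
    exact exists_lift hp γ.toContinuousMap e₀ (by simp [hpe₀])
  choose L hLc hL0 hLp using hexl
  -- independence of the chosen path
  have hindep : ∀ (z : X) (γ γ' : Path x₀ z), L z γ 1 = L z γ' 1 := by
    intro z γ γ'
    set Loop : Path x₀ x₀ := γ.trans γ'.symm with hLoop
    obtain ⟨q, hq⟩ := hiso.2 (⟦Loop⟧)
    have hqm : (⟦q.out⟧ : Path.Homotopic.Quotient (⟨x₀,hx₀⟩:V) (⟨x₀,hx₀⟩:V)) = q :=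
      Quotient.out_eq q
    set m : Path (⟨x₀,hx₀⟩:V) (⟨x₀,hx₀⟩:V) := q.out with hm
    have hmL : (m.map continuous_subtype_val).Homotopic Loop := by
      have h1 := Path.Homotopic.Quotient.mk_map m
        (⟨(Subtype.val : V → X), continuous_subtype_val⟩ : C(V, X))
      have h3 : Path.Homotopic.Quotient.map ⟦m⟧
          (⟨(Subtype.val : V → X), continuous_subtype_val⟩ : C(V, X)) = ⟦Loop⟧ := by
        rw [hqm]
        exact hq
      exact Quotient.exact (h1.trans h3)
    set aγ := L z γ 1 with haγ
    have hpaγ : p aγ = z := by rw [haγ, hLp]; exact γ.target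
    obtain ⟨Q, hQc, hQ0, hQp⟩ := exists_lift hp γ'.symm.toContinuousMap aγ
      (by simpa using hpaγ)
    set P₁ : Path e₀ aγ := ⟨⟨L z γ, hLc z γ⟩, hL0 z γ, rfl⟩ with hP₁
    set P₂ : Path aγ (Q 1) := ⟨⟨Q, hQc⟩, hQ0, rfl⟩ with hP₂
    have hPlift : ∀ t, p ((P₁.trans P₂) t) = Loop t := by
      intro t
      rw [hLoop, Path.trans_apply, Path.trans_apply]
      split_ifs with h
      · exact hLp z γ _
      · exact hQp _
    have hsm0 : s (m 0) = e₀ := by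
      rw [he₀]; congr 1; exact m.source
    have hQ1 : Q 1 = e₀ := by
      have hend : (fun t => s (m t)) 1 = (P₁.trans P₂) 1 := by
        apply endpoint_eq hp hmL (hs.comp m.continuous) (P₁.trans P₂).continuous
          hsm0 ((P₁.trans P₂).source) (fun t => by simp [hps, Path.map_coe]) hPlift
      have h2 : (P₁.trans P₂) 1 = Q 1 := (P₁.trans P₂).target
      have h3 : (fun t => s (m t)) 1 = e₀ := by
        show s (m 1) = e₀
        rw [he₀]; congr 1; exact m.target
      rw [← h2, ← hend, h3]
    -- the reversed lift
    have hR : L z γ' = fun t => Q (σ t) := by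
      have hcσ : Continuous (fun t => Q (σ t)) := hQc.comp continuous_symm
      apply lift_unique hp (hLc z γ') hcσ
      · intro t
        show p (L z γ' t) = p (Q (σ t))
        rw [hLp z γ' t, hQp (σ t)]
        show γ' t = γ'.symm.toContinuousMap (σ t)
        simp [Path.symm_apply]
      · rw [hL0]
        show e₀ = Q (σ 0)
        rw [symm_zero, hQ1]
    show L z γ 1 = L z γ' 1
    rw [hR]
    show aγ = Q (σ 1)
    rw [symm_one, ← hQ0]
  -- the extension
  set S : X → E := fun x => L x (PathConnectedSpace.somePath x₀ x) 1 with hS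
  have hSlift : ∀ x, p (S x) = x := by
    intro x
    rw [hS, hLp]
    exact (PathConnectedSpace.somePath x₀ x).target
  -- key formula: S along any path via a local section
  have hSappend : ∀ (x y : X) (α : Path x y),
      (∀ t, α t ∈ (hp x).toTrivialization.baseSet) →
      S y = sec hp x (S x) y := by
    intro x y α hα
    have hmemx : x ∈ (hp x).toTrivialization.baseSet := (hp x).mem_toTrivialization_baseSet
    set γx : Path x₀ x := PathConnectedSpace.somePath x₀ x with hγx
    have hΓα0 : sec hp x (S x) (α 0) = S x := by
      have h := sec_self hp x (S x) (by rw [hSlift x]; exact hmemx)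
      rw [hSlift x] at h
      rw [α.source]
      exact h
    set Pγ : Path e₀ (S x) := ⟨⟨L x γx, hLc x γx⟩, hL0 x γx, rfl⟩ with hPγ
    set Pα : Path (S x) (sec hp x (S x) y) :=
      ⟨⟨fun t => sec hp x (S x) (α t),
        (sec_continuousOn hp x (S x)).comp_continuous α.continuous hα⟩,
        hΓα0, by simp [α.target]⟩ with hPα
    have hEq : L y (γx.trans α) = (Pγ.trans Pα : unitInterval → E) := by
      apply lift_unique hp (hLc y _) (Pγ.trans Pα).continuous
      · intro t
        rw [hLp y (γx.trans α) t]
        show (γx.trans α) t = p ((Pγ.trans Pα) t)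
        rw [Path.trans_apply, Path.trans_apply]
        split_ifs with h
        · exact (hLp x γx _).symm
        · exact (sec_proj hp x (S x) (hα _)).symm
      · rw [hL0]
        exact (Pγ.trans Pα).source.symm
    have := hindep y (PathConnectedSpace.somePath x₀ y) (γx.trans α)
    rw [hS]
    show L y (PathConnectedSpace.somePath x₀ y) 1 = _
    rw [this, hEq]
    exact (Pγ.trans Pα).target
  -- continuity
  have hScont : Continuous S := by
    rw [continuous_iff_continuousAt]
    intro x
    have hmemx : x ∈ (hp x).toTrivialization.baseSet := (hp x).mem_toTrivialization_baseSet
    have hUnhds : (hp x).toTrivialization.baseSet ∈ nhds x :=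
      (hp x).toTrivialization.open_baseSet.mem_nhds hmemx
    obtain ⟨N, ⟨hNopen, hxN, hNpc⟩, hNsub⟩ :=
      (isOpen_isPathConnected_basis x).mem_iff.mp hUnhds
    have hEqOn : Set.EqOn S (sec hp x (S x)) N := by
      intro y hy
      obtain ⟨α, hα⟩ := hNpc.joinedIn x hxN y hy
      exact hSappend x y α (fun t => hNsub (hα t))
    have hNnhds : N ∈ nhds x := hNopen.mem_nhds hxN
    apply ContinuousAt.congr_of_eventuallyEq
      (((sec_continuousOn hp x (S x)).continuousAt hUnhds))
      (Filter.eventuallyEq_of_mem hNnhds (fun y hy => (hEqOn hy)))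
  -- extension of s
  have hSext : ∀ v : V, S (v : X) = s v := by
    intro v
    have hVpc : IsPathConnected V := (hV.isConnected_iff_isPathConnected).mp hVconn
    obtain ⟨β, hβ⟩ := hVpc.joinedIn x₀ hx₀ (v : X) v.2
    have hlift : L (v : X) β = fun t => s ⟨β t, hβ t⟩ := by
      have hc2 : Continuous (fun t : unitInterval => s ⟨β t, hβ t⟩) :=
        hs.comp (β.continuous.subtype_mk _)
      apply lift_unique hp (hLc _ β) hc2
      · intro t
        show p (L (v : X) β t) = p (s ⟨β t, hβ t⟩)
        rw [hLp _ β t, hps ⟨β t, hβ t⟩]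
      · rw [hL0]
        show e₀ = s ⟨β 0, _⟩
        rw [he₀]; congr 1; ext; exact β.source.symm
    have h1 := hindep (v : X) (PathConnectedSpace.somePath x₀ (v : X)) β
    rw [hS]
    show L (v:X) (PathConnectedSpace.somePath x₀ (v:X)) 1 = s v
    rw [h1, hlift]
    show s ⟨β 1, _⟩ = s v
    congr 1; ext; exact β.target
  refine ⟨S, ⟨hScont, hSlift, hSext⟩, ?_⟩
  rintro S' ⟨hS'c, hS'l, hS'e⟩
  apply hp.eq_of_comp_eq hS'c hScont
    (funext fun x => by rw [Function.comp_apply, Function.comp_apply, hS'l, hSlift]) x₀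
  rw [hS'e ⟨x₀, hx₀⟩, hSext ⟨x₀, hx₀⟩]
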